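/- Let $f = (f_0,\dots,f_n)$ be homogeneous polynomials of degree $e$ with no common factor defining a nondegenerate map $\mathbb{P}^1 \to \mathbb{P}^n$, and suppose $(a_0,\dots,a_n)$ is a tuple of homogeneous degree-2 polynomials, not all zero, with a common linear factor, satisfying $\sum a_i \partial_s f_i = \sum a_i \partial_t f_i = 0$. Then $f$ is degenerate: there exist constants $c_0,\dots,c_n$, not all zero, with $\sum c_i f_i = 0$. -/

import Mathlib

open MvPolynomial

section Aux

variable {K : Type*} [Field K]

lemma aux_hom_coeff {p : MvPolynomial (Fin 2) K} {m : ℕ} (hp : p.IsHomogeneous m)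
    {d : Fin 2 →₀ ℕ} (hd : coeff d p ≠ 0) : d.degree = m := by
  rw [Finsupp.degree_eq_weight_one]
  exact hp hd

lemma aux_degree_fin2 (d : Fin 2 →₀ ℕ) : d.degree = d 0 + d 1 := by
  rw [Finsupp.degree_apply, Finset.sum_subset (Finset.subset_univ d.support)
    (fun i _ hi => by simpa using Finsupp.notMem_support_iff.mp hi)]
  simp [Fin.sum_univ_two]

lemma aux_deg_one (d : Fin 2 →₀ ℕ) (hd : d.degree = 1) :
    d = Finsupp.single 0 1 ∨ d = Finsupp.single 1 1 := by
  rw [aux_degree_fin2] at hd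
  rcases Nat.eq_zero_or_pos (d 0) with h0 | h0
  · right
    ext j
    fin_cases j <;> simp [Finsupp.single_apply] <;> omega
  · left
    ext j
    fin_cases j <;> simp [Finsupp.single_apply] <;> omega

lemma aux_linear_eq (p : MvPolynomial (Fin 2) K) (hp : p.IsHomogeneous 1) :
    p = C (coeff (Finsupp.single 0 1) p) * X 0 + C (coeff (Finsupp.single 1 1) p) * X 1 := by
  have hne : (Finsupp.single (0 : Fin 2) 1) ≠ Finsupp.single 1 1 := by
    intro h
    have := DFunLike.congr_fun h 0
    simp [Finsupp.single_apply] at this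
  ext d
  classical
  rw [coeff_add, coeff_C_mul, coeff_C_mul, coeff_X', coeff_X']
  by_cases h0 : Finsupp.single (0 : Fin 2) 1 = d
  · subst h0
    rw [if_pos rfl, if_neg (fun h => hne h.symm)]
    simp
  by_cases h1 : Finsupp.single (1 : Fin 2) 1 = d
  · subst h1
    rw [if_neg hne, if_pos rfl]
    simp
  · rw [if_neg h0, if_neg h1]
    by_contra hc
    have hcd : coeff d p ≠ 0 := by simpa using hc
    rcases aux_deg_one d (aux_hom_coeff hp hcd) with h | h
    · exact h0 h.symm
    · exact h1 h.symm

lemma aux_euler (m : ℕ) (p : MvPolynomial (Fin 2) K) (hp : p.IsHomogeneous m) :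
    X 0 * pderiv 0 p + X 1 * pderiv 1 p = C (m : K) * p := by
  have key : ∀ (i : Fin 2) (d : Fin 2 →₀ ℕ) (c : K),
      X i * pderiv i (monomial d c) = monomial d (c * d i) := by
    intro i d c
    rw [pderiv_monomial]
    rcases Nat.eq_zero_or_pos (d i) with h | h
    · simp [h]
    · have hd' : Finsupp.single i 1 + (d - Finsupp.single i 1) = d := by
        ext j
        simp only [Finsupp.add_apply, Finsupp.tsub_apply, Finsupp.single_apply]
        by_cases hji : i = j
        · subst hji
          rw [if_pos rfl]
          omega
        · simp [hji]
      rw [X, monomial_mul, one_mul, hd']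
  conv_lhs => rw [p.as_sum]
  conv_rhs => rw [p.as_sum]
  rw [map_sum, map_sum, Finset.mul_sum, Finset.mul_sum, Finset.mul_sum,
    ← Finset.sum_add_distrib]
  refine Finset.sum_congr rfl fun d hd => ?_
  rw [key 0, key 1]
  have hdm : d 0 + d 1 = m := by
    rw [← aux_degree_fin2]
    exact aux_hom_coeff hp (mem_support_iff.mp hd)
  rw [← map_add, C_mul_monomial]
  congr 1
  push_cast [← hdm]
  ring

lemma aux_quot_hom (ℓ b : MvPolynomial (Fin 2) K) (hℓ : ℓ.IsHomogeneous 1) (hℓ0 : ℓ ≠ 0)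
    (hab : (ℓ * b).IsHomogeneous 2) : b.IsHomogeneous 1 := by
  have hk : ∀ k, k ≠ 1 → homogeneousComponent k b = 0 := by
    intro k hk1
    by_cases hkr : k ∈ Finset.range (b.totalDegree + 1)
    · have heq : ℓ * b = ∑ i ∈ Finset.range (b.totalDegree + 1),
          ℓ * homogeneousComponent i b := by
        rw [← Finset.mul_sum, sum_homogeneousComponent]
      have h2 := congrArg (homogeneousComponent (k + 1)) heq
      rw [homogeneousComponent_of_mem ((mem_homogeneousSubmodule _ _).mpr hab),
        if_neg (by omega), map_sum] at h2
      have h3 : ∀ i ∈ Finset.range (b.totalDegree + 1),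
          homogeneousComponent (k + 1) (ℓ * homogeneousComponent i b) =
            if i = k then ℓ * homogeneousComponent k b else 0 := by
        intro i _
        have hhom : (ℓ * homogeneousComponent i b).IsHomogeneous (1 + i) :=
          hℓ.mul (homogeneousComponent_isHomogeneous i b)
        rw [homogeneousComponent_of_mem ((mem_homogeneousSubmodule _ _).mpr hhom)]
        by_cases hik : i = k
        · subst hik
          simp [Nat.add_comm]
        · rw [if_neg (by omega), if_neg hik]
      rw [Finset.sum_congr rfl h3, Finset.sum_ite_eq' _ k, if_pos hkr] at h2
      rcases mul_eq_zero.mp h2.symm with h | h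
      · exact absurd h hℓ0
      · exact h
    · exact homogeneousComponent_eq_zero _ b (by simpa using hkr)
  have hb1 : b = homogeneousComponent 1 b := by
    conv_lhs => rw [← sum_homogeneousComponent b]
    rw [Finset.sum_eq_single 1 (fun i _ hi => hk i hi)
      (fun h => homogeneousComponent_eq_zero _ b (by simp at h; omega))]
  rw [hb1]
  exact homogeneousComponent_isHomogeneous 1 b

lemma aux_pderiv_linear (p : MvPolynomial (Fin 2) K) (hp : p.IsHomogeneous 1) (j : Fin 2) :
    pderiv j p = C (coeff (Finsupp.single j 1) p) := by
  conv_lhs => rw [aux_linear_eq p hp]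
  match j with
  | 0 => simp [pderiv_C_mul, pderiv_X_of_ne (by decide : (1 : Fin 2) ≠ 0)]
  | 1 => simp [pderiv_C_mul, pderiv_X_of_ne (by decide : (0 : Fin 2) ≠ 1)]

end Aux

/-- Lemma 4.5 (lem-reducible): if the Jacobian of a nondegenerate `f` (coordinates
homogeneous of degree `e` with no common factor) satisfies a nonzero degree-two
relation whose entries have a common linear factor, then `f` is degenerate. -/
theorem stmt_11 {K : Type*} [Field K] [CharZero K] (n e : ℕ) (he : 1 ≤ e)
    (f : Fin (n + 1) → MvPolynomial (Fin 2) K)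
    (hf : ∀ i, (f i).IsHomogeneous e)
    (hcf : ∀ p : MvPolynomial (Fin 2) K, (∀ i, p ∣ f i) → IsUnit p)
    (hnd : ¬ ∃ c : Fin (n + 1) → K, c ≠ 0 ∧ ∑ i, C (c i) * f i = 0)
    (a : Fin (n + 1) → MvPolynomial (Fin 2) K)
    (ha2 : ∀ i, (a i).IsHomogeneous 2) (hane : a ≠ 0)
    (hl : ∃ ℓ : MvPolynomial (Fin 2) K, ℓ.IsHomogeneous 1 ∧ ∀ i, ℓ ∣ a i)
    (hs : ∑ i, a i * pderiv 0 (f i) = 0)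
    (ht : ∑ i, a i * pderiv 1 (f i) = 0) :
    ∃ c : Fin (n + 1) → K, c ≠ 0 ∧ ∑ i, C (c i) * f i = 0 := by
  obtain ⟨ℓ, hℓ1, hdvd⟩ := hl
  -- ℓ ≠ 0
  have hℓ0 : ℓ ≠ 0 := by
    intro h
    apply hane
    funext i
    simpa [h] using hdvd i
  -- extract the cofactors b i
  choose b hb using hdvd
  have hb1 : ∀ i, (b i).IsHomogeneous 1 := fun i =>
    aux_quot_hom ℓ (b i) hℓ1 hℓ0 (by rw [← hb i]; exact ha2 i)
  -- divide the relations by ℓ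
  have key : ∀ (j : Fin 2), ∑ i, a i * pderiv j (f i) = 0 →
      ∑ i, b i * pderiv j (f i) = 0 := by
    intro j hj
    have hsum : ℓ * ∑ i, b i * pderiv j (f i) = 0 := by
      rw [Finset.mul_sum, ← hj]
      exact Finset.sum_congr rfl fun i _ => by rw [hb i]; ring
    rcases mul_eq_zero.mp hsum with h | h
    · exact absurd h hℓ0
    · exact h
  have hder0 : ∑ i, b i * pderiv 0 (f i) = 0 := key 0 hs
  have hder1 : ∑ i, b i * pderiv 1 (f i) = 0 := key 1 ht
  -- Euler relation gives ∑ b i * f i = 0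
  have hbf : ∑ i, b i * f i = 0 := by
    have h1 : C (e : K) * ∑ i, b i * f i = 0 := by
      have e1 : C (e : K) * ∑ i, b i * f i =
          X 0 * (∑ i, b i * pderiv 0 (f i)) + X 1 * (∑ i, b i * pderiv 1 (f i)) := by
        rw [Finset.mul_sum, Finset.mul_sum, Finset.mul_sum, ← Finset.sum_add_distrib]
        refine Finset.sum_congr rfl fun i _ => ?_
        rw [show X (0 : Fin 2) * (b i * pderiv 0 (f i)) + X 1 * (b i * pderiv 1 (f i)) =
          b i * (X 0 * pderiv 0 (f i) + X 1 * pderiv 1 (f i)) by ring,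
          aux_euler e (f i) (hf i)]
        ring
      rw [e1, hder0, hder1]
      ring
    have hC : (C (e : K) : MvPolynomial (Fin 2) K) ≠ 0 := by
      simp only [ne_eq, C_eq_zero, Nat.cast_eq_zero]
      omega
    rcases mul_eq_zero.mp h1 with h | h
    · exact absurd h hC
    · exact h
  -- differentiate to get constant relations
  have hconst : ∀ j : Fin 2, ∑ i, C (coeff (Finsupp.single j 1) (b i)) * f i = 0 := by
    intro j
    have h1 := congrArg (pderiv j) hbf
    rw [map_sum, map_zero] at h1
    have h2 : ∀ i ∈ Finset.univ, (pderiv j) (b i * f i) =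
        pderiv j (b i) * f i + b i * pderiv j (f i) := fun i _ => pderiv_mul
    rw [Finset.sum_congr rfl h2, Finset.sum_add_distrib] at h1
    have h3 : ∑ i, b i * pderiv j (f i) = 0 := by
      fin_cases j
      · exact hder0
      · exact hder1
    rw [h3, add_zero] at h1
    rw [← h1]
    exact Finset.sum_congr rfl fun i _ => by rw [aux_pderiv_linear (b i) (hb1 i) j]
  set α : Fin (n + 1) → K := fun i => coeff (Finsupp.single 0 1) (b i) with hα
  set β : Fin (n + 1) → K := fun i => coeff (Finsupp.single 1 1) (b i) with hβ
  by_cases hαz : α = 0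
  · refine ⟨β, ?_, hconst 1⟩
    intro hβz
    apply hane
    funext i
    have h0 : α i = 0 := by rw [hαz]; rfl
    have h1 : β i = 0 := by rw [hβz]; rfl
    rw [hα] at h0
    rw [hβ] at h1
    simp only at h0 h1
    have hbi : b i = 0 := by
      rw [aux_linear_eq (b i) (hb1 i), h0, h1]
      simp
    rw [hb i, hbi, mul_zero]
    rfl
  · exact ⟨α, hαz, hconst 0⟩
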